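/- Let e be a transitive relation on a set E. Every regular closed subset a of e satisfies both a = cl(⋃{c : c clopen, c ⊆ a}) and a = cl(int(⋂{c : c clopen, a ⊆ c})); that is, every element of Reg(e) is a join of clopen sets and a meet of clopen sets (so Reg(e) is the Dedekind–MacNeille completion of Clop(e)). Consequently, every completely join-irreducible element of Reg(e) is clopen. -/

import Mathlib

/-- A binary relation (as a set of pairs) is transitive. -/
def TransRel {E : Type*} (a : Set (E × E)) : Prop :=
  ∀ x y z : E, (x, y) ∈ a → (y, z) ∈ a → (x, z) ∈ a

/-- The transitive closure of a set of pairs. -/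
def tcl {E : Type*} (a : Set (E × E)) : Set (E × E) :=
  {p | Relation.TransGen (fun u v => (u, v) ∈ a) p.1 p.2}

/-- The interior of `a` relative to `e`. -/
def tint {E : Type*} (e a : Set (E × E)) : Set (E × E) :=
  e \ tcl (e \ a)

/-- `a` is a closed subset of `e`. -/
def IsClosedIn {E : Type*} (e a : Set (E × E)) : Prop :=
  a ⊆ e ∧ TransRel a

/-- `a` is an open subset of `e`. -/
def IsOpenIn {E : Type*} (e a : Set (E × E)) : Prop :=
  a ⊆ e ∧ TransRel (e \ a)

/-- `a` is a clopen subset of `e`. -/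
def IsClopenIn {E : Type*} (e a : Set (E × E)) : Prop :=
  a ⊆ e ∧ TransRel a ∧ TransRel (e \ a)

/-- `a` is a regular closed subset of `e`. -/
def RegClosed {E : Type*} (e a : Set (E × E)) : Prop :=
  a ⊆ e ∧ a = tcl (tint e a)

/-- The reflexive preordering `x ⊴ y` associated with `e`. -/
def rle {E : Type*} (e : Set (E × E)) (x y : E) : Prop :=
  (x, y) ∈ e ∨ x = y

/-- `x ≡ y`: `x ⊴ y` and `y ⊴ x`. -/
def eqv {E : Type*} (e : Set (E × E)) (x y : E) : Prop :=
  rle e x y ∧ rle e y x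

/-- `e` is square-free. -/
def SqFree {E : Type*} (e : Set (E × E)) : Prop :=
  ∀ a b x y : E, (a, b) ∈ e → rle e a x → rle e x b → rle e a y → rle e y b →
    rle e x y ∨ rle e y x

/-- The interval `[a,b] = {x | a ⊴ x ⊴ b}`. -/
def cce {E : Type*} (e : Set (E × E)) (a b : E) : Set E :=
  {x | rle e a x ∧ rle e x b}

/-- `(a,b,U) ∈ F(e)`. -/
def Ftriple {E : Type*} (e : Set (E × E)) (a b : E) (U : Set E) : Prop :=
  (a, b) ∈ e ∧ U ⊆ cce e a b ∧ (a ≠ b → a ∉ U ∧ b ∈ U)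

/-- The clopen set `⟨a,b,U⟩ = e ∩ (({a} ∪ Uᶜ) × ({b} ∪ U))`. -/
def pji {E : Type*} (e : Set (E × E)) (a b : E) (U : Set E) : Set (E × E) :=
  e ∩ ((({a} : Set E) ∪ (cce e a b \ U)) ×ˢ (({b} : Set E) ∪ U))

/-- The set `p₋` associated with `p = ⟨a,b,U⟩`: if `a ≠ b` it is
`p \ ([a] × [b])`, and if `a = b` it is `p \ {(a,a)}`. -/
def pminus {E : Type*} (e : Set (E × E)) (a b : E) (U : Set E) : Set (E × E) :=
  {z ∈ pji e a b U | ¬ ((a ≠ b ∧ eqv e z.1 a ∧ eqv e z.2 b) ∨ (a = b ∧ z = (a, a)))}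

section Aux

variable {E : Type*}

lemma subset_tcl (a : Set (E × E)) : a ⊆ tcl a := by
  rintro ⟨x, y⟩ h
  exact Relation.TransGen.single h

lemma tcl_transRel (a : Set (E × E)) : TransRel (tcl a) := fun x y z hxy hyz =>
  Relation.TransGen.trans hxy hyz

lemma tcl_mono {a b : Set (E × E)} (h : a ⊆ b) : tcl a ⊆ tcl b := by
  rintro ⟨x, y⟩ hp
  exact Relation.TransGen.mono (fun u v huv => h huv) _ _ hp

lemma tcl_subset {a b : Set (E × E)} (hb : TransRel b) (h : a ⊆ b) : tcl a ⊆ b := by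
  rintro ⟨x, y⟩ hp
  simp only [tcl, Set.mem_setOf_eq] at hp
  induction hp with
  | single hxy => exact h hxy
  | tail _ hxy ih => exact hb _ _ _ ih (h hxy)

lemma tcl_eq_self {a : Set (E × E)} (ha : TransRel a) : tcl a = a :=
  Set.Subset.antisymm (tcl_subset ha subset_rfl) (subset_tcl a)

lemma diff_diff_self {e c : Set (E × E)} (h : c ⊆ e) : e \ (e \ c) = c := by
  ext z
  constructor
  · rintro ⟨hze, hn⟩
    by_contra hc
    exact hn ⟨hze, hc⟩
  · intro hz
    exact ⟨h hz, fun hd => hd.2 hz⟩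

lemma tint_subset (e a : Set (E × E)) : tint e a ⊆ e := Set.diff_subset

lemma tint_mono (e : Set (E × E)) {a b : Set (E × E)} (h : a ⊆ b) : tint e a ⊆ tint e b :=
  Set.diff_subset_diff_right (tcl_mono (Set.diff_subset_diff_right h))

lemma regClosed_transRel {e a : Set (E × E)} (ha : RegClosed e a) : TransRel a := by
  rw [ha.2]; exact tcl_transRel _

lemma rle_trans {e : Set (E × E)} (he : TransRel e) {x y z : E}
    (h1 : rle e x y) (h2 : rle e y z) : rle e x z := by
  rcases h1 with h1 | rfl
  · rcases h2 with h2 | rfl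
    · exact Or.inl (he _ _ _ h1 h2)
    · exact Or.inl h1
  · exact h2

lemma clopen_pji {e : Set (E × E)} (he : TransRel e) (x y : E) (U : Set E)
    (hU : U ⊆ cce e x y) : IsClopenIn e (pji e x y U) := by
  refine ⟨Set.inter_subset_left, ?_, ?_⟩
  · rintro u v w ⟨hu_e, hu1, _⟩ ⟨hv_e, _, hv2⟩
    exact ⟨he u v w hu_e hv_e, hu1, hv2⟩
  · rintro u v w ⟨huv_e, huv_n⟩ ⟨hvw_e, hvw_n⟩
    refine ⟨he u v w huv_e hvw_e, fun huw => ?_⟩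
    obtain ⟨_, hu, hw⟩ := huw
    have hxu : rle e x u := by
      rcases hu with hu | hu
      · exact Or.inr hu.symm
      · exact hu.1.1
    have hwy : rle e w y := by
      rcases hw with hw | hw
      · exact Or.inr hw
      · exact (hU hw).2
    have hv_cce : v ∈ cce e x y :=
      ⟨rle_trans he hxu (Or.inl huv_e), rle_trans he (Or.inl hvw_e) hwy⟩
    by_cases hvU : v ∈ U
    · exact huv_n ⟨huv_e, hu, Or.inr hvU⟩
    · exact hvw_n ⟨hvw_e, Or.inr ⟨hv_cce, hvU⟩, hw⟩

lemma clopen_compl {e c : Set (E × E)} (h : IsClopenIn e c) : IsClopenIn e (e \ c) := by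
  refine ⟨Set.diff_subset, h.2.2, ?_⟩
  rw [diff_diff_self h.1]
  exact h.2.1

lemma clopen_regClosed {e c : Set (E × E)} (h : IsClopenIn e c) : RegClosed e c := by
  refine ⟨h.1, ?_⟩
  rw [tint, tcl_eq_self h.2.2, diff_diff_self h.1, tcl_eq_self h.2.1]

/-- Key lemma: every point of the interior of a set lies in a clopen subset of it. -/
lemma exists_clopen_of_mem_tint {e a : Set (E × E)} (he : TransRel e) (ha : a ⊆ e)
    {x y : E} (hxy : (x, y) ∈ tint e a) :
    ∃ c, IsClopenIn e c ∧ c ⊆ a ∧ (x, y) ∈ c := by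
  classical
  set U : Set E := {z | z ∈ cce e x y ∧ (x, z) ∉ tcl (e \ a)} with hUdef
  have hU : U ⊆ cce e x y := fun z hz => hz.1
  refine ⟨pji e x y U, clopen_pji he x y U hU, ?_, ?_⟩
  · rintro ⟨u, v⟩ ⟨huv_e, hu, hv⟩
    by_contra hn
    have huv : (u, v) ∈ tcl (e \ a) := subset_tcl _ ⟨huv_e, hn⟩
    have hxv : (x, v) ∈ tcl (e \ a) := by
      rcases hu with hu | hu
      · rw [Set.mem_singleton_iff] at hu
        subst hu; exact huv
      · have hxu : (x, u) ∈ tcl (e \ a) := by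
          by_contra hc
          exact hu.2 ⟨hu.1, hc⟩
        exact tcl_transRel _ x u v hxu huv
    rcases hv with hv | hv
    · rw [Set.mem_singleton_iff] at hv
      subst hv; exact hxy.2 hxv
    · exact hv.2 hxv
  · exact ⟨hxy.1, Or.inl rfl, Or.inl rfl⟩

/-- Key lemma: every point of `e` outside a regular closed `a` avoids some clopen `c ⊇ a`. -/
lemma exists_clopen_sep {e a : Set (E × E)} (he : TransRel e) (ha : RegClosed e a)
    {x y : E} (hxy : (x, y) ∈ e) (hxy' : (x, y) ∉ a) :
    ∃ c, IsClopenIn e c ∧ a ⊆ c ∧ (x, y) ∉ c := by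
  have hatr : TransRel a := regClosed_transRel ha
  have htint : tint e (e \ a) = e \ a := by
    rw [tint, diff_diff_self ha.1, tcl_eq_self hatr]
  have hmem : (x, y) ∈ tint e (e \ a) := by rw [htint]; exact ⟨hxy, hxy'⟩
  obtain ⟨c, hc, hsub, hmemc⟩ := exists_clopen_of_mem_tint he Set.diff_subset hmem
  refine ⟨e \ c, clopen_compl hc, ?_, fun h => h.2 hmemc⟩
  intro z hz
  exact ⟨ha.1 hz, fun hzc => (hsub hzc).2 hz⟩

end Aux

/-- every regular closed subset of `e` is a join of clopen sets and a meet of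
clopen sets (so `Reg(e)` is the Dedekind–MacNeille completion of `Clop(e)`); consequently,
every completely join-irreducible element of `Reg(e)` is clopen. -/
theorem regClosed_joins_meets_of_clopen {E : Type*} (e : Set (E × E)) (he : TransRel e) :
    (∀ a : Set (E × E), RegClosed e a →
      a = tcl (⋃₀ {c | IsClopenIn e c ∧ c ⊆ a}) ∧
      a = tcl (tint e (⋂₀ {c | IsClopenIn e c ∧ a ⊆ c}))) ∧
    (∀ p : Set (E × E), RegClosed e p →
      (∃ p', RegClosed e p' ∧ p' ⊂ p ∧ ∀ x, RegClosed e x → x ⊂ p → x ⊆ p') →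
      IsClopenIn e p) := by
  have main : ∀ a : Set (E × E), RegClosed e a →
      a = tcl (⋃₀ {c | IsClopenIn e c ∧ c ⊆ a}) ∧
      a = tcl (tint e (⋂₀ {c | IsClopenIn e c ∧ a ⊆ c})) := by
    intro a ha
    have hatr : TransRel a := regClosed_transRel ha
    constructor
    · apply Set.Subset.antisymm
      · conv_lhs => rw [ha.2]
        apply tcl_mono
        rintro ⟨x, y⟩ hxy
        obtain ⟨c, hc, hsub, hmem⟩ := exists_clopen_of_mem_tint he ha.1 hxy
        exact ⟨c, ⟨hc, hsub⟩, hmem⟩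
      · apply tcl_subset hatr
        rintro z ⟨c, ⟨_, hsub⟩, hz⟩
        exact hsub hz
    · apply Set.Subset.antisymm
      · conv_lhs => rw [ha.2]
        apply tcl_mono
        apply tint_mono
        intro z hz c hc
        exact hc.2 hz
      · apply tcl_subset hatr
        rintro ⟨x, y⟩ hxy
        by_contra hn
        obtain ⟨c, hc, hsub, hmem⟩ := exists_clopen_sep he ha hxy.1 hn
        refine hxy.2 (subset_tcl _ ⟨hxy.1, fun hi => hmem (hi c ⟨hc, hsub⟩)⟩)
  refine ⟨main, ?_⟩
  rintro p hp ⟨p', hp', hlt, hmax⟩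
  by_contra hnc
  have hptr : TransRel p' := regClosed_transRel hp'
  have hsub : ⋃₀ {c | IsClopenIn e c ∧ c ⊆ p} ⊆ p' := by
    rintro z ⟨c, ⟨hc, hcp⟩, hz⟩
    have hne : c ≠ p := fun h => hnc (h ▸ hc)
    exact hmax c (clopen_regClosed hc) (ssubset_of_subset_of_ne hcp hne) hz
  have : p ⊆ p' := by
    rw [(main p hp).1]
    exact tcl_subset hptr hsub
  exact hlt.2 this
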